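/- Let H be a closed half-space in ℝ^N and f : ℝ → ℝ a measurable function. For any measurable u : ℝ^N → ℝ such that f∘u is integrable on ℝ^N, the polarization u^H satisfies ∫_{ℝ^N} f(u^H(x)) dx = ∫_{ℝ^N} f(u(x)) dx. -/

import Mathlib

open MeasureTheory

/-- Reflection of `x` across the hyperplane `{x | ⟪x, e⟫ = t}`. -/
noncomputable def reflH {N : ℕ} (e : EuclideanSpace ℝ (Fin N)) (t : ℝ)
    (x : EuclideanSpace ℝ (Fin N)) : EuclideanSpace ℝ (Fin N) :=
  x - (2 * ((inner ℝ x e : ℝ) - t)) • e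

/-- Polarization of `u` with respect to the closed half-space `{x | t ≤ ⟪x, e⟫}`. -/
noncomputable def polarize {N : ℕ} (e : EuclideanSpace ℝ (Fin N)) (t : ℝ)
    (u : EuclideanSpace ℝ (Fin N) → ℝ) (x : EuclideanSpace ℝ (Fin N)) : ℝ :=
  if t ≤ (inner ℝ x e : ℝ) then max (u x) (u (reflH e t x)) else min (u x) (u (reflH e t x))

section Aux

variable {N : ℕ} {e : EuclideanSpace ℝ (Fin N)} {t : ℝ}

lemma inner_reflH (he : ‖e‖ = 1) (x : EuclideanSpace ℝ (Fin N)) :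
    (inner ℝ (reflH e t x) e : ℝ) = 2 * t - inner ℝ x e := by
  have h1 : (inner ℝ e e : ℝ) = 1 := by
    rw [real_inner_self_eq_norm_mul_norm, he]; norm_num
  rw [reflH, inner_sub_left, real_inner_smul_left, h1]; ring

lemma reflH_invol (he : ‖e‖ = 1) (x : EuclideanSpace ℝ (Fin N)) :
    reflH e t (reflH e t x) = x := by
  have h := inner_reflH (t := t) he x
  rw [reflH, h, reflH]
  module

lemma reflH_eq (he : ‖e‖ = 1) (x : EuclideanSpace ℝ (Fin N)) :
    reflH e t x = (Submodule.reflection (ℝ ∙ e)ᗮ) (x - t • e) + t • e := by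
  have h1 : (inner ℝ e e : ℝ) = 1 := by
    rw [real_inner_self_eq_norm_mul_norm, he]; norm_num
  rw [Submodule.reflection_orthogonal_apply, Submodule.reflection_singleton_apply, reflH]
  simp only [he, inner_sub_right, real_inner_smul_right, h1, real_inner_comm e x, two_smul,
    RCLike.ofReal_one, one_pow, div_one, mul_one]
  module

lemma reflH_measurePreserving (he : ‖e‖ = 1) :
    MeasurePreserving (reflH e t) (volume : Measure (EuclideanSpace ℝ (Fin N))) volume := by
  have : reflH e t =
      (fun y : EuclideanSpace ℝ (Fin N) => y + t • e) ∘ (Submodule.reflection (ℝ ∙ e)ᗮ) ∘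
        (fun y : EuclideanSpace ℝ (Fin N) => y + (-(t • e))) := by
    funext x
    simp [reflH_eq he x, sub_eq_add_neg]
  rw [this]
  exact ((measurePreserving_add_right volume (t • e)).comp
    (LinearIsometryEquiv.measurePreserving _)).comp
    (measurePreserving_add_right volume (-(t • e)))

lemma reflH_continuous : Continuous (reflH e t) := by
  refine continuous_id.sub (Continuous.smul (f := fun x : EuclideanSpace ℝ (Fin N) => 2 * (inner ℝ x e - t)) (g := fun _ => e) ?_ continuous_const)
  exact (continuous_const.mul ((continuous_id.inner continuous_const).sub continuous_const))

end Aux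

/-- Integrals of `f ∘ u` are invariant under polarization. -/
theorem stmt1 (N : ℕ) (e : EuclideanSpace ℝ (Fin N)) (he : ‖e‖ = 1) (t : ℝ)
    (f : ℝ → ℝ) (hf : Measurable f)
    (u : EuclideanSpace ℝ (Fin N) → ℝ) (hu : Measurable u)
    (hint : Integrable (fun x => f (u x)) volume) :
    ∫ x, f (polarize e t u x) = ∫ x, f (u x) := by
  set σ : EuclideanSpace ℝ (Fin N) → EuclideanSpace ℝ (Fin N) := reflH e t with hσdef
  have hmp : MeasurePreserving σ volume volume := reflH_measurePreserving he
  have hσσ : ∀ x, σ (σ x) = x := reflH_invol he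
  -- measurable equiv
  let σe : EuclideanSpace ℝ (Fin N) ≃ᵐ EuclideanSpace ℝ (Fin N) :=
    { toEquiv := ⟨σ, σ, hσσ, hσσ⟩
      measurable_toFun := hmp.measurable
      measurable_invFun := hmp.measurable }
  have hemb : MeasurableEmbedding σ := σe.measurableEmbedding
  have hinner : Measurable fun x : EuclideanSpace ℝ (Fin N) => (inner ℝ x e : ℝ) :=
    (continuous_id.inner continuous_const).measurable
  have hpol : Measurable (polarize e t u) := by
    unfold polarize
    exact Measurable.ite (measurableSet_le measurable_const hinner)
      (hu.max (hu.comp hmp.measurable)) (hu.min (hu.comp hmp.measurable))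
  -- pointwise choice: polarize is either u x or u (σ x)
  have hchoice : ∀ x, polarize e t u x = u x ∨ polarize e t u x = u (σ x) := by
    intro x
    unfold polarize
    split
    · rcases max_choice (u x) (u (reflH e t x)) with h | h
      · exact Or.inl h
      · exact Or.inr h
    · rcases min_choice (u x) (u (reflH e t x)) with h | h
      · exact Or.inl h
      · exact Or.inr h
  -- integrability of f ∘ u ∘ σ
  have hintσ : Integrable (fun x => f (u (σ x))) volume :=
    (hmp.integrable_comp_emb hemb).2 hint
  -- integrability of f ∘ polarize
  have hintp : Integrable (fun x => f (polarize e t u x)) volume := by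
    refine Integrable.mono' (hint.abs.add hintσ.abs) ((hf.comp hpol).aestronglyMeasurable) ?_
    filter_upwards with x
    rcases hchoice x with h | h <;> rw [h]
    · exact le_add_of_le_of_nonneg le_rfl (abs_nonneg _)
    · exact le_add_of_nonneg_of_le (abs_nonneg _) le_rfl
  have hintpσ : Integrable (fun x => f (polarize e t u (σ x))) volume :=
    (hmp.integrable_comp_emb hemb).2 hintp
  -- key pointwise identity
  have hkey : ∀ x, f (polarize e t u x) + f (polarize e t u (σ x)) = f (u x) + f (u (σ x)) := by
    intro x
    have hs : (inner ℝ (σ x) e : ℝ) = 2 * t - inner ℝ x e := inner_reflH he x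
    rcases lt_trichotomy ((inner ℝ x e : ℝ)) t with hlt | heq | hgt
    · have h1 : ¬ t ≤ (inner ℝ x e : ℝ) := not_le.2 hlt
      have h2 : t ≤ (inner ℝ (σ x) e : ℝ) := by rw [hs]; linarith
      unfold polarize
      rw [if_neg h1, if_pos h2]
      show f (min (u x) (u (σ x))) + f (max (u (σ x)) (u (σ (σ x)))) = _
      rw [hσσ x]
      rcases le_total (u x) (u (σ x)) with h | h
      · rw [min_eq_left h, max_eq_left h]
      · rw [min_eq_right h, max_eq_right h]; ring
    · have hfix : σ x = x := by
        show reflH e t x = x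
        rw [reflH, heq]
        module
      rw [hfix]
      unfold polarize
      rw [if_pos (le_of_eq heq.symm), show reflH e t x = x from hfix, max_self]
    · have h1 : t ≤ (inner ℝ x e : ℝ) := le_of_lt hgt
      have h2 : ¬ t ≤ (inner ℝ (σ x) e : ℝ) := by rw [hs]; push_neg; linarith
      unfold polarize
      rw [if_pos h1, if_neg h2]
      show f (max (u x) (u (σ x))) + f (min (u (σ x)) (u (σ (σ x)))) = _
      rw [hσσ x]
      rcases le_total (u x) (u (σ x)) with h | h
      · rw [max_eq_right h, min_eq_right h]; ring
      · rw [max_eq_left h, min_eq_left h]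
  -- integrals under composition with σ
  have e1 : ∫ x, f (polarize e t u (σ x)) = ∫ x, f (polarize e t u x) :=
    hmp.integral_comp hemb (fun y => f (polarize e t u y))
  have e2 : ∫ x, f (u (σ x)) = ∫ x, f (u x) :=
    hmp.integral_comp hemb (fun y => f (u y))
  have e3 : ∫ x, (f (polarize e t u x) + f (polarize e t u (σ x)))
      = (∫ x, f (polarize e t u x)) + ∫ x, f (polarize e t u (σ x)) :=
    integral_add hintp hintpσ
  have e4 : ∫ x, (f (u x) + f (u (σ x))) = (∫ x, f (u x)) + ∫ x, f (u (σ x)) :=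
    integral_add hint hintσ
  have e5 : ∫ x, (f (polarize e t u x) + f (polarize e t u (σ x)))
      = ∫ x, (f (u x) + f (u (σ x))) := by
    congr 1
    funext x
    exact hkey x
  rw [e1] at e3
  rw [e2] at e4
  rw [e3, e4] at e5
  linarith
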